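/- Let Σ be an augmented tree with magic number m = m(H): any horizontal path of length at most H, when pushed down m levels, has endpoints at distance at most one. If u lies in the umbra U(V) and v ∈ C_u, then |v - complement of S(V)| ≥ |v| - (|u| + m). -/

import Mathlib

/-- An augmented tree on the words `X*`: the tree of words (with vertical edges from
`v` to `xv`) augmented by a set of horizontal edges joining words of equal length, such
that the endpoints of a horizontal edge have truncations (deleting the first letter)
which either coincide or are again joined by a horizontal edge. -/
structure AugmentedTree (X : Type*) where
  horiz : List X → List X → Prop
  horiz_symm : ∀ u v, horiz u v → horiz v u
  horiz_irrefl : ∀ u, ¬ horiz u u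
  horiz_length : ∀ u v, horiz u v → u.length = v.length
  horiz_push : ∀ (x y : X) (u v : List X), horiz (x :: u) (y :: v) → u = v ∨ horiz u v

/-- The graph of an augmented tree: vertical tree edges together with horizontal edges. -/
def AugmentedTree.graph {X : Type*} (T : AugmentedTree X) : SimpleGraph (List X) where
  Adj u v := T.horiz u v ∨ (∃ x : X, v = x :: u) ∨ (∃ x : X, u = x :: v)
  symm := by
    constructor
    intro u v h
    rcases h with h | ⟨x, rfl⟩ | ⟨x, rfl⟩
    · exact Or.inl (T.horiz_symm u v h)
    · exact Or.inr (Or.inr ⟨x, rfl⟩)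
    · exact Or.inr (Or.inl ⟨x, rfl⟩)
  loopless := by
    constructor
    intro u h
    rcases h with h | ⟨x, hx⟩ | ⟨x, hx⟩
    · exact T.horiz_irrefl u h
    · have := congrArg List.length hx; simp at this
    · have := congrArg List.length hx; simp at this

/-- The cone over a word `v`: the set of words ending in `v`. -/
def Cone {X : Type*} (v : List X) : Set (List X) := {u | ∃ w : List X, u = w ++ v}

/-- The vertex set of the shadow `S(V)`: the union of the cones over elements of `V`. -/
def shadowSet {X : Type*} (V : Set (List X)) : Set (List X) := ⋃ v ∈ V, Cone v

/-- Every dart of the walk is a downward vertical step (deleting the first letter). -/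
def WalkDown {X : Type*} (T : AugmentedTree X) {u v : List X} (p : T.graph.Walk u v) : Prop :=
  ∀ d ∈ p.darts, ∃ x : X, d.toProd.1 = x :: d.toProd.2

/-- Every dart of the walk is an upward vertical step (prepending a letter). -/
def WalkUp {X : Type*} (T : AugmentedTree X) {u v : List X} (p : T.graph.Walk u v) : Prop :=
  ∀ d ∈ p.darts, ∃ x : X, d.toProd.2 = x :: d.toProd.1

/-- Every dart of the walk is a horizontal step. -/
def WalkHoriz {X : Type*} (T : AugmentedTree X) {u v : List X} (p : T.graph.Walk u v) : Prop :=
  ∀ d ∈ p.darts, T.horiz d.toProd.1 d.toProd.2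

/-- A walk is in normal form (with horizontal part of length at most `H`) if it is the
concatenation of a descending vertical segment, a horizontal segment of length at most
`H`, and an ascending vertical segment. -/
def IsNormalForm {X : Type*} (T : AugmentedTree X) (H : ℕ) {u v : List X}
    (p : T.graph.Walk u v) : Prop :=
  ∃ (a b : List X) (p₁ : T.graph.Walk u a) (p₂ : T.graph.Walk a b) (p₃ : T.graph.Walk b v),
    p = p₁.append (p₂.append p₃) ∧ WalkDown T p₁ ∧ WalkHoriz T p₂ ∧ WalkUp T p₃ ∧
      p₂.length ≤ H

/-- The umbra `U(V)`: the set of vertices of the shadow `S(V)` at distance greater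
than 1 from the complement of `S(V)`. -/
def umbraSet {X : Type*} (T : AugmentedTree X) (V : Set (List X)) : Set (List X) :=
  {u | u ∈ shadowSet V ∧ ∀ y : List X, y ∉ shadowSet V → 2 ≤ T.graph.dist u y}

section Aux

variable {X : Type*} (T : AugmentedTree X)

/-- Pushing a horizontal edge down one level. -/
lemma horiz_tail {c d : List X} (h : T.horiz c d) :
    c.tail = d.tail ∨ T.horiz c.tail d.tail := by
  cases c with
  | nil =>
    have := T.horiz_length _ _ h
    cases d with
    | nil => exact absurd h (T.horiz_irrefl _)
    | cons y d' => simp at this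
  | cons x c' =>
    cases d with
    | nil => have := T.horiz_length _ _ h; simp at this
    | cons y d' => exact T.horiz_push x y c' d' h

/-- Pushing a horizontal edge down `k` levels. -/
lemma horiz_drop (k : ℕ) : ∀ {c d : List X}, T.horiz c d →
    c.drop k = d.drop k ∨ T.horiz (c.drop k) (d.drop k) := by
  induction k with
  | zero => intro c d h; exact Or.inr h
  | succ k ih =>
    intro c d h
    have h1 : c.drop (k + 1) = c.tail.drop k := by
      rw [← List.drop_one, List.drop_drop, Nat.add_comm]
    have h2 : d.drop (k + 1) = d.tail.drop k := by
      rw [← List.drop_one, List.drop_drop, Nat.add_comm]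
    rcases horiz_tail T h with he | hh
    · left; rw [h1, h2, he]
    · rw [h1, h2]; exact ih hh

lemma walkDown_suffix {s t : List X} (p : T.graph.Walk s t) (h : WalkDown T p) :
    t <:+ s ∧ s.length = p.length + t.length := by
  induction p with
  | nil => simp
  | @cons s s' t hadj q ih =>
    have hd : ∃ x : X, s = x :: s' := by
      have := h ⟨(s, s'), hadj⟩ (by simp [SimpleGraph.Walk.darts_cons])
      exact this
    obtain ⟨x, rfl⟩ := hd
    have hq : WalkDown T q := fun d hd' => h d (by simp [SimpleGraph.Walk.darts_cons, hd'])
    obtain ⟨hsuf, hlen⟩ := ih hq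
    refine ⟨hsuf.trans ⟨[x], rfl⟩, ?_⟩
    simp [hlen]; omega

lemma walkUp_suffix {s t : List X} (p : T.graph.Walk s t) (h : WalkUp T p) :
    s <:+ t ∧ t.length = p.length + s.length := by
  induction p with
  | nil => simp
  | @cons s s' t hadj q ih =>
    have hd : ∃ x : X, s' = x :: s := by
      have := h ⟨(s, s'), hadj⟩ (by simp [SimpleGraph.Walk.darts_cons])
      exact this
    obtain ⟨x, rfl⟩ := hd
    have hq : WalkUp T q := fun d hd' => h d (by simp [SimpleGraph.Walk.darts_cons, hd'])
    obtain ⟨hsuf, hlen⟩ := ih hq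
    refine ⟨(List.suffix_cons x s).trans hsuf, ?_⟩
    simp [hlen] at *; omega

lemma walkHoriz_length {s t : List X} (p : T.graph.Walk s t) (h : WalkHoriz T p) :
    s.length = t.length := by
  induction p with
  | nil => rfl
  | @cons s s' t hadj q ih =>
    have hd : T.horiz s s' := h ⟨(s, s'), hadj⟩ (by simp [SimpleGraph.Walk.darts_cons])
    have hq : WalkHoriz T q := fun d hd' => h d (by simp [SimpleGraph.Walk.darts_cons, hd'])
    exact (T.horiz_length _ _ hd).trans (ih hq)

/-- A walk down to the empty word. -/
def walkToNil : (l : List X) → T.graph.Walk l []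
  | [] => SimpleGraph.Walk.nil
  | x :: l => SimpleGraph.Walk.cons (Or.inr (Or.inr ⟨x, rfl⟩)) (walkToNil l)

lemma graph_preconnected : T.graph.Preconnected := by
  intro a b
  exact ⟨(walkToNil T a).append (walkToNil T b).reverse⟩

/-- The shadow is closed upwards along cones. -/
lemma shadow_suffix_closed {V : Set (List X)} {z w : List X}
    (hz : z ∈ shadowSet V) (h : z <:+ w) : w ∈ shadowSet V := by
  simp only [shadowSet, Set.mem_iUnion, Cone, Set.mem_setOf_eq] at hz ⊢
  obtain ⟨v₀, hv₀, t, rfl⟩ := hz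
  obtain ⟨s, rfl⟩ := h
  exact ⟨v₀, hv₀, s ++ t, by simp⟩

/-- Two suffixes of the same list compare. -/
lemma suffix_of_suffix_length_le {a b l : List X} (ha : a <:+ l) (hb : b <:+ l)
    (h : a.length ≤ b.length) : a <:+ b := by
  rw [← List.reverse_prefix] at ha hb ⊢
  exact List.prefix_of_prefix_length_le ha hb (by simpa)

end Aux

/-- Unit speed penetration: in a hyperbolic augmented tree with normal form geodesics
(horizontal part of length at most `H`) and magic number `m` (any horizontal path of
length at most `H`, pushed down `m` levels, has endpoints at distance at most one), if
`u` lies in the umbra `U(V)` and `v ∈ C_u`, then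
`|v - complement of S(V)| ≥ |v| - (|u| + m)`. -/
theorem stmt14 {X : Type*} (T : AugmentedTree X) (H m : ℕ)
    (hNF : ∀ u v : List X,
      ∃ p : T.graph.Walk u v, p.length = T.graph.dist u v ∧ IsNormalForm T H p)
    (hmagic : ∀ (u v : List X) (p : T.graph.Walk u v), WalkHoriz T p → p.length ≤ H →
      m ≤ u.length → T.graph.dist (u.drop m) (v.drop m) ≤ 1)
    (n : ℕ) (V : Set (List X)) (hV : ∀ v ∈ V, v.length = n)
    (u : List X) (hu : u ∈ umbraSet T V) (v : List X) (hv : v ∈ Cone u) :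
    ∀ y : List X, y ∉ shadowSet V → v.length ≤ T.graph.dist v y + (u.length + m) := by
  intro y hy
  obtain ⟨p, hlen, a, b, p₁, p₂, p₃, hp, hd1, hh2, hu3, hH⟩ := hNF v y
  obtain ⟨hav, hlen1⟩ := walkDown_suffix T p₁ hd1
  obtain ⟨hby, hlen3⟩ := walkUp_suffix T p₃ hu3
  have hab : a.length = b.length := walkHoriz_length T p₂ hh2
  have hplen : p.length = p₁.length + (p₂.length + p₃.length) := by
    rw [hp]; simp [SimpleGraph.Walk.length_append]
  obtain ⟨w, rfl⟩ := hv
  by_cases hcase : a.length ≤ u.length + m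
  · omega
  · exfalso
    push_neg at hcase
    have hm : m ≤ a.length := by omega
    have hdist := hmagic a b p₂ hh2 hH hm
    have hua : u <:+ a :=
      suffix_of_suffix_length_le (List.suffix_append w u) hav (by omega)
    have hua' : u <:+ a.drop m :=
      suffix_of_suffix_length_le hua (List.drop_suffix m a)
        (by rw [List.length_drop]; omega)
    have huS : u ∈ shadowSet V := hu.1
    have hb'y : b.drop m <:+ y := (List.drop_suffix m b).trans hby
    have hb'S : b.drop m ∉ shadowSet V := fun h => hy (shadow_suffix_closed h hb'y)
    have hne : a.drop m ≠ b.drop m := by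
      intro h
      exact hb'S (shadow_suffix_closed huS (h ▸ hua'))
    have hreach : T.graph.Reachable (a.drop m) (b.drop m) := graph_preconnected T _ _
    have hd0 : T.graph.dist (a.drop m) (b.drop m) ≠ 0 := by
      exact fun h => hne (hreach.dist_eq_zero_iff.mp h)
    have hadj : T.graph.Adj (a.drop m) (b.drop m) := by
      rw [← SimpleGraph.dist_eq_one_iff_adj]; omega
    have hhor : T.horiz (a.drop m) (b.drop m) := by
      rcases hadj with h | ⟨x, hx⟩ | ⟨x, hx⟩
      · exact h
      · have := congrArg List.length hx; simp [List.length_drop] at this; omega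
      · have := congrArg List.length hx; simp [List.length_drop] at this; omega
    -- push the horizontal edge down to the level of u
    obtain ⟨t, ht⟩ := hua'
    have hdropa : (a.drop m).drop t.length = u := by
      rw [← ht]; exact List.drop_left
    have hb0y : (b.drop m).drop t.length <:+ y :=
      (List.drop_suffix t.length (b.drop m)).trans hb'y
    have hb0S : (b.drop m).drop t.length ∉ shadowSet V :=
      fun h => hy (shadow_suffix_closed h hb0y)
    rcases horiz_drop T t.length hhor with he | hh
    · refine hb0S (shadow_suffix_closed huS ?_)
      rw [← he, hdropa]
    · rw [hdropa] at hh
      have hadj2 : T.graph.Adj u ((b.drop m).drop t.length) := Or.inl hh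
      have hdle : T.graph.dist u ((b.drop m).drop t.length) ≤ 1 :=
        SimpleGraph.dist_le (SimpleGraph.Walk.cons hadj2 SimpleGraph.Walk.nil)
      have := hu.2 _ hb0S
      omega
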